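/- With d, Q, w_I as above, max_{x∈Q} d(x) − min_{x∈Q} d(x) ≤ M_Q ln|Σ|, where M_Q := max_{x∈Q} ‖x‖₁. -/

import Mathlib

open scoped BigOperators

/-- A treeplex: information sets with finite nonempty action sets and a
parent function forming a rooted tree (witnessed by a depth function). -/
structure Treeplex where
  Info : Type
  Act : Info → Type
  finInfo : Fintype Info
  decInfo : DecidableEq Info
  finAct : ∀ i, Fintype (Act i)
  decAct : ∀ i, DecidableEq (Act i)
  neAct : ∀ i, Nonempty (Act i)
  parent : Info → Option (Σ i : Info, Act i)
  depth : Info → ℕ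
  parent_depth : ∀ i' i a, parent i' = some ⟨i, a⟩ → depth i < depth i'

instance (T : Treeplex) : Fintype T.Info := T.finInfo
instance (T : Treeplex) : DecidableEq T.Info := T.decInfo
instance (T : Treeplex) (i : T.Info) : Fintype (T.Act i) := T.finAct i
instance (T : Treeplex) (i : T.Info) : DecidableEq (T.Act i) := T.decAct i
instance (T : Treeplex) (i : T.Info) : Nonempty (T.Act i) := T.neAct i

namespace Treeplex

/-- The index set Σ = {∅} ∪ {(I,a)}. -/
abbrev Idx (T : Treeplex) := Option (Σ i : T.Info, T.Act i)

/-- The strategy set (sequence-form polytope). -/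
def Q (T : Treeplex) : Set (T.Idx → ℝ) :=
  {x | (∀ j, 0 ≤ x j) ∧ x none = 1 ∧
    ∀ i : T.Info, x (T.parent i) = ∑ a : T.Act i, x (some ⟨i, a⟩)}

/-- Sum of `w` over the children information sets of the sequence `(i, a)`. -/
def childSum (T : Treeplex) (w : T.Info → ℝ) (i : T.Info) (a : T.Act i) : ℝ :=
  ∑ i' : T.Info, if T.parent i' = some ⟨i, a⟩ then w i' else 0

/-- `w` satisfies the recursion `w_I = 1 + max_{a} ∑_{I' : p(I')=(I,a)} w_{I'}`. -/
def IsWeight (T : Treeplex) (w : T.Info → ℝ) : Prop :=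
  ∀ i : T.Info,
    w i = 1 + Finset.univ.sup' Finset.univ_nonempty (fun a : T.Act i => T.childSum w i a)

/-- The dilated entropy prox-function
`d(x) = x_∅ ln x_∅ + ∑_{I,a} (w_I − ∑_{p(I')=(I,a)} w_{I'}) x_{I,a} ln x_{I,a}`. -/
noncomputable def prox (T : Treeplex) (w : T.Info → ℝ) (x : T.Idx → ℝ) : ℝ :=
  x none * Real.log (x none) +
    ∑ i : T.Info, ∑ a : T.Act i,
      (w i - T.childSum w i a) * (x (some ⟨i, a⟩) * Real.log (x (some ⟨i, a⟩)))

end Treeplex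

namespace Treeplex

variable (T : Treeplex)

/-- Rank of an index: 0 for the root sequence, depth+1 for (i,a). -/
def rank : T.Idx → ℕ
  | none => 0
  | some s => T.depth s.1 + 1

/-- Maximal depth. -/
def maxD : ℕ := Finset.univ.sup T.depth

lemma depth_le_maxD (i : T.Info) : T.depth i ≤ T.maxD :=
  Finset.le_sup (Finset.mem_univ i)

/-- Root information sets. -/
def roots : Finset T.Info := Finset.univ.filter (fun i => T.parent i = none)

/-- Downward (leaves-to-root) induction. -/
lemma down_ind (P : T.Info → Prop)
    (h : ∀ i, (∀ i' a, T.parent i' = some ⟨i, a⟩ → P i') → P i) : ∀ i, P i := by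
  suffices key : ∀ n i, T.maxD + 1 - T.depth i ≤ n → P i from
    fun i => key (T.maxD + 1) i (by omega)
  intro n
  induction n with
  | zero => intro i hi; have := T.depth_le_maxD i; omega
  | succ n ih =>
      intro i hi
      refine h i (fun i' a hpa => ih i' ?_)
      have h1 := T.parent_depth i' i a hpa
      have h2 := T.depth_le_maxD i'
      omega

/-- Upward (root-to-leaves) induction. -/
lemma up_ind (P : T.Info → Prop)
    (h : ∀ i, (∀ i' a, T.parent i = some ⟨i', a⟩ → P i') → P i) : ∀ i, P i := by
  suffices key : ∀ n i, T.depth i ≤ n → P i from fun i => key (T.depth i) i le_rfl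
  intro n
  induction n with
  | zero =>
      intro i hi
      refine h i (fun i' a hpa => ?_)
      have := T.parent_depth i i' a hpa
      omega
  | succ n ih =>
      intro i hi
      refine h i (fun i' a hpa => ih i' ?_)
      have := T.parent_depth i i' a hpa
      omega

lemma rank_parent_le (i : T.Info) : T.rank (T.parent i) ≤ T.depth i := by
  cases hp : T.parent i with
  | none => simp [rank]
  | some s =>
      obtain ⟨i', a⟩ := s
      have := T.parent_depth i i' a hp
      simpa [rank] using this

variable {T}
variable {w : T.Info → ℝ}

lemma one_le_w (hw : T.IsWeight w) : ∀ i, 1 ≤ w i := by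
  refine T.down_ind _ (fun i ih => ?_)
  rw [hw i]
  obtain ⟨a⟩ := T.neAct i
  have h1 : (0:ℝ) ≤ T.childSum w i a := by
    refine Finset.sum_nonneg (fun i' _ => ?_)
    split
    · exact le_trans zero_le_one (ih i' a ‹_›)
    · exact le_rfl
  have h2 := Finset.le_sup' (fun a => T.childSum w i a) (Finset.mem_univ a)
  linarith [le_trans h1 h2]

lemma childSum_nonneg (hw : T.IsWeight w) (i : T.Info) (a : T.Act i) :
    0 ≤ T.childSum w i a := by
  refine Finset.sum_nonneg (fun i' _ => ?_)
  split
  · exact le_trans zero_le_one (one_le_w hw i')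
  · exact le_rfl

lemma childSum_le_sub_one (hw : T.IsWeight w) (i : T.Info) (a : T.Act i) :
    T.childSum w i a ≤ w i - 1 := by
  have h := Finset.le_sup' (fun a => T.childSum w i a) (Finset.mem_univ a)
  rw [hw i]
  rw [add_sub_cancel_left]; exact h

lemma one_le_coeff (hw : T.IsWeight w) (i : T.Info) (a : T.Act i) :
    1 ≤ w i - T.childSum w i a := by
  have := childSum_le_sub_one hw i a
  linarith

lemma w_le_childSum (hw : T.IsWeight w) {i i' : T.Info} {a : T.Act i}
    (h : T.parent i' = some ⟨i, a⟩) : w i' ≤ T.childSum w i a := by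
  have := Finset.single_le_sum
    (f := fun i'' => if T.parent i'' = some ⟨i, a⟩ then w i'' else 0)
    (fun j _ => by
      split
      · exact le_trans zero_le_one (one_le_w hw j)
      · exact le_rfl)
    (Finset.mem_univ i')
  simpa [childSum, h] using this

lemma w_le_rootSum (hw : T.IsWeight w) : ∀ i, w i ≤ ∑ j ∈ T.roots, w j := by
  refine T.up_ind _ (fun i ih => ?_)
  cases hp : T.parent i with
  | none =>
      exact Finset.single_le_sum
        (fun j _ => le_trans zero_le_one (one_le_w hw j))
        (by simp [roots, hp])
  | some s =>
      obtain ⟨i', a⟩ := s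
      calc w i ≤ T.childSum w i' a := w_le_childSum hw hp
        _ ≤ w i' - 1 := childSum_le_sub_one hw i' a
        _ ≤ w i' := by linarith
        _ ≤ ∑ j ∈ T.roots, w j := ih i' a hp

lemma roots_nonempty [Nonempty T.Info] : T.roots.Nonempty := by
  obtain ⟨i, -, hmin⟩ := Finset.exists_min_image Finset.univ T.depth Finset.univ_nonempty
  refine ⟨i, ?_⟩
  cases hp : T.parent i with
  | none => simp [roots, hp]
  | some s =>
      obtain ⟨i', a⟩ := s
      have h1 := T.parent_depth i i' a hp
      have h2 := hmin i' (Finset.mem_univ i')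
      omega

lemma one_le_rootSum (hw : T.IsWeight w) [Nonempty T.Info] :
    (1:ℝ) ≤ ∑ j ∈ T.roots, w j := by
  obtain ⟨j, hj⟩ := roots_nonempty (T := T)
  calc (1:ℝ) ≤ w j := one_le_w hw j
    _ ≤ ∑ j ∈ T.roots, w j :=
        Finset.single_le_sum (fun j _ => le_trans zero_le_one (one_le_w hw j)) hj

lemma mem_Q_le_one {x : T.Idx → ℝ} (hx : x ∈ T.Q) : ∀ j, x j ≤ 1 := by
  obtain ⟨hpos, hroot, hcons⟩ := hx
  suffices key : ∀ n j, T.rank j ≤ n → x j ≤ 1 from fun j => key (T.rank j) j le_rfl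
  intro n
  induction n with
  | zero =>
      intro j hj
      cases j with
      | none => rw [hroot]
      | some s => simp [rank] at hj
  | succ n ih =>
      intro j hj
      cases j with
      | none => rw [hroot]
      | some s =>
          obtain ⟨i, a⟩ := s
          have h1 : x (some ⟨i, a⟩) ≤ ∑ a' : T.Act i, x (some ⟨i, a'⟩) :=
            Finset.single_le_sum (f := fun a' => x (some ⟨i, a'⟩))
              (fun a' _ => hpos _) (Finset.mem_univ a)
          rw [← hcons i] at h1
          refine le_trans h1 (ih (T.parent i) ?_)
          have h2 := T.rank_parent_le i
          simp only [rank] at hj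
          omega

lemma sigma_sum (f : (Σ i : T.Info, T.Act i) → ℝ) :
    ∑ s, f s = ∑ i, ∑ a, f ⟨i, a⟩ := by
  rw [← Finset.univ_sigma_univ, Finset.sum_sigma]

/-- Key telescoping identity: the coefficient-weighted mass of any `x ∈ Q`
equals the sum of the root weights. -/
lemma telescope {x : T.Idx → ℝ} (hx : x ∈ T.Q) :
    ∑ i, ∑ a, (w i - T.childSum w i a) * x (some ⟨i, a⟩) = ∑ j ∈ T.roots, w j := by
  obtain ⟨hpos, hroot, hcons⟩ := hx
  have hsplit : ∀ i : T.Info, ∑ a, (w i - T.childSum w i a) * x (some ⟨i, a⟩)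
      = w i * x (T.parent i) - ∑ a, T.childSum w i a * x (some ⟨i, a⟩) := by
    intro i
    rw [hcons i, Finset.mul_sum, ← Finset.sum_sub_distrib]
    exact Finset.sum_congr rfl (fun a _ => by ring)
  rw [Finset.sum_congr rfl (fun i _ => hsplit i), Finset.sum_sub_distrib]
  have hB : ∑ i, ∑ a, T.childSum w i a * x (some ⟨i, a⟩)
      = ∑ i', if T.parent i' = none then 0 else w i' * x (T.parent i') := by
    have h1 : ∀ (i : T.Info) (a : T.Act i), T.childSum w i a * x (some ⟨i, a⟩)
        = ∑ i', if T.parent i' = some ⟨i, a⟩ then w i' * x (some ⟨i, a⟩) else 0 := by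
      intro i a
      rw [childSum, Finset.sum_mul]
      exact Finset.sum_congr rfl (fun i' _ => by split <;> simp
        )
    calc ∑ i, ∑ a, T.childSum w i a * x (some ⟨i, a⟩)
        = ∑ i, ∑ a, ∑ i', if T.parent i' = some ⟨i, a⟩ then w i' * x (some ⟨i, a⟩) else 0 :=
          Finset.sum_congr rfl (fun i _ => Finset.sum_congr rfl (fun a _ => h1 i a))
      _ = ∑ i', ∑ i, ∑ a, if T.parent i' = some ⟨i, a⟩ then w i' * x (some ⟨i, a⟩) else 0 := by
          rw [Finset.sum_comm]
          exact Finset.sum_congr rfl (fun i _ => Finset.sum_comm)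
      _ = ∑ i', if T.parent i' = none then 0 else w i' * x (T.parent i') := by
          refine Finset.sum_congr rfl (fun i' _ => ?_)
          rw [← sigma_sum (fun s => if T.parent i' = some s then w i' * x (some s) else 0)]
          cases hp : T.parent i' with
          | none => simp
          | some s0 => simp [eq_comm]
  rw [hB]
  have hA : ∑ i, w i * x (T.parent i)
      - ∑ i', (if T.parent i' = none then 0 else w i' * x (T.parent i'))
      = ∑ i, (if T.parent i = none then w i * x (T.parent i) else 0) := by
    rw [← Finset.sum_sub_distrib]
    refine Finset.sum_congr rfl (fun i _ => by split <;> ring)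
  rw [hA]
  have h2 : ∀ i : T.Info, (if T.parent i = none then w i * x (T.parent i) else 0)
      = (if T.parent i = none then w i else 0) := by
    intro i
    split
    · rw [‹T.parent i = none›, hroot, mul_one]
    · rfl
  rw [Finset.sum_congr rfl (fun i _ => h2 i), roots, Finset.sum_filter]

end Treeplex


namespace Treeplex

variable {T : Treeplex} {w : T.Info → ℝ}

/-- Fuel-indexed greedy strategy. -/
noncomputable def fstar (T : Treeplex) (c : ∀ i, T.Act i) : ℕ → T.Idx → ℝ
  | _, none => 1
  | 0, some _ => 0
  | (n+1), some ⟨i, a⟩ => if a = c i then fstar T c n (T.parent i) else 0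

lemma fstar_none (c : ∀ i, T.Act i) (n : ℕ) : fstar T c n none = 1 := by
  cases n <;> rfl

lemma fstar_nonneg (c : ∀ i, T.Act i) : ∀ (n : ℕ) (j : T.Idx), 0 ≤ fstar T c n j := by
  intro n
  induction n with
  | zero =>
      intro j
      cases j with
      | none => rw [fstar_none]; norm_num
      | some s => exact le_rfl
  | succ n ih =>
      intro j
      cases j with
      | none => rw [fstar_none]; norm_num
      | some s =>
          obtain ⟨i, a⟩ := s
          show (0:ℝ) ≤ if a = c i then fstar T c n (T.parent i) else 0
          split
          · exact ih _
          · exact le_rfl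

lemma fstar_stable (c : ∀ i, T.Act i) :
    ∀ (n m : ℕ) (j : T.Idx), T.rank j ≤ n → T.rank j ≤ m →
      fstar T c n j = fstar T c m j := by
  intro n
  induction n with
  | zero =>
      intro m j hn hm
      cases j with
      | none => rw [fstar_none, fstar_none]
      | some s => simp [rank] at hn
  | succ n ih =>
      intro m j hn hm
      cases j with
      | none => rw [fstar_none, fstar_none]
      | some s =>
          obtain ⟨i, a⟩ := s
          simp only [rank] at hn hm
          cases m with
          | zero => omega
          | succ m =>
              show (if a = c i then fstar T c n (T.parent i) else 0)
                  = (if a = c i then fstar T c m (T.parent i) else 0)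
              have hr := T.rank_parent_le i
              rw [ih m (T.parent i) (by omega) (by omega)]

/-- The greedy strategy. -/
noncomputable def xstar (T : Treeplex) (c : ∀ i, T.Act i) : T.Idx → ℝ :=
  fstar T c (T.maxD + 1)

lemma rank_le_maxD (j : T.Idx) : T.rank j ≤ T.maxD + 1 := by
  cases j with
  | none => simp [rank]
  | some s => simpa [rank] using T.depth_le_maxD s.1

lemma xstar_some (c : ∀ i, T.Act i) (i : T.Info) (a : T.Act i) :
    xstar T c (some ⟨i, a⟩) = if a = c i then xstar T c (T.parent i) else 0 := by
  show (if a = c i then fstar T c T.maxD (T.parent i) else 0) = _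
  have hr := T.rank_parent_le i
  have hd := T.depth_le_maxD i
  rw [fstar_stable c T.maxD (T.maxD + 1) (T.parent i) (by omega) (by omega)]
  rfl

lemma xstar_mem_Q (c : ∀ i, T.Act i) : xstar T c ∈ T.Q := by
  refine ⟨fun j => fstar_nonneg c _ j, fstar_none c _, fun i => ?_⟩
  have : ∑ a : T.Act i, xstar T c (some ⟨i, a⟩)
      = ∑ a : T.Act i, if a = c i then xstar T c (T.parent i) else 0 :=
    Finset.sum_congr rfl (fun a _ => xstar_some c i a)
  rw [this, Finset.sum_ite_eq' Finset.univ (c i) (fun _ => xstar T c (T.parent i))]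
  simp

/-- A choice of maximizing action for each information set. -/
noncomputable def choiceFn (T : Treeplex) (w : T.Info → ℝ) (i : T.Info) : T.Act i :=
  (Finset.exists_mem_eq_sup' Finset.univ_nonempty (fun a => T.childSum w i a)).choose

lemma choiceFn_spec (i : T.Info) :
    Finset.univ.sup' Finset.univ_nonempty (fun a => T.childSum w i a)
      = T.childSum w i (choiceFn T w i) :=
  (Finset.exists_mem_eq_sup' Finset.univ_nonempty
    (fun a => T.childSum w i a)).choose_spec.2

lemma coeff_choiceFn (hw : T.IsWeight w) (i : T.Info) :
    w i - T.childSum w i (choiceFn T w i) = 1 := by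
  rw [hw i, ← choiceFn_spec i]
  ring

/-- The ℓ₁ norm of the greedy strategy is `1 + ∑_{roots} w`. -/
lemma xstar_norm (hw : T.IsWeight w) :
    ∑ j, |xstar T (choiceFn T w) j| = 1 + ∑ j ∈ T.roots, w j := by
  set c := choiceFn T w
  have habs : ∀ j, |xstar T c j| = xstar T c j := fun j =>
    abs_of_nonneg (fstar_nonneg c _ j)
  have hnone : xstar T c none = 1 := fstar_none c _
  rw [Finset.sum_congr rfl (fun j _ => habs j), Fintype.sum_option, hnone]
  have hQ := xstar_mem_Q c
  have hmass : ∑ i : T.Info, xstar T c (T.parent i) = ∑ j ∈ T.roots, w j := by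
    have htel := telescope (w := w) hQ
    rw [← htel]
    refine Finset.sum_congr rfl (fun i _ => ?_)
    have : ∑ a, (w i - T.childSum w i a) * xstar T c (some ⟨i, a⟩)
        = ∑ a, if a = c i then (w i - T.childSum w i a) * xstar T c (T.parent i) else 0 := by
      refine Finset.sum_congr rfl (fun a _ => ?_)
      rw [xstar_some c i a]
      split <;> simp
    rw [this, Finset.sum_ite_eq' Finset.univ (c i)
      (fun a => (w i - T.childSum w i a) * xstar T c (T.parent i))]
    simp [coeff_choiceFn hw i]
    rw [show w i - T.childSum w i (c i) = 1 from coeff_choiceFn hw i, one_mul]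
  rw [sigma_sum (fun s => xstar T c (some s)),
    Finset.sum_congr rfl (fun i _ => (hQ.2.2 i).symm), hmass]

end Treeplex


namespace Treeplex

variable {T : Treeplex} {w : T.Info → ℝ}

lemma prox_nonpos (hw : T.IsWeight w) {x : T.Idx → ℝ} (hx : x ∈ T.Q) :
    T.prox w x ≤ 0 := by
  have hle1 := mem_Q_le_one hx
  rw [prox, hx.2.1, Real.log_one, mul_zero, zero_add]
  refine Finset.sum_nonpos (fun i _ => Finset.sum_nonpos (fun a _ => ?_))
  refine mul_nonpos_of_nonneg_of_nonpos
    (le_trans zero_le_one (one_le_coeff hw i a)) ?_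
  exact mul_nonpos_of_nonneg_of_nonpos (hx.1 _)
    (Real.log_nonpos (hx.1 _) (hle1 _))

lemma neg_prox_le (hw : T.IsWeight w) [Nonempty T.Info] {x : T.Idx → ℝ}
    (hx : x ∈ T.Q) :
    -T.prox w x ≤ (∑ j ∈ T.roots, w j) * Real.log (Fintype.card T.Idx) := by
  have : Nonempty (Σ i : T.Info, T.Act i) :=
    ⟨⟨Classical.arbitrary _, Classical.arbitrary _⟩⟩
  set S := ∑ j ∈ T.roots, w j with hSdef
  set C := ∑ s : Σ i : T.Info, T.Act i, (w s.1 - T.childSum w s.1 s.2) with hCdef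
  set n := Fintype.card (Σ i : T.Info, T.Act i) with hndef
  have hS : (1:ℝ) ≤ S := one_le_rootSum hw
  have hSpos : (0:ℝ) < S := lt_of_lt_of_le one_pos hS
  have hcs : ∀ s : Σ i : T.Info, T.Act i, 1 ≤ w s.1 - T.childSum w s.1 s.2 :=
    fun s => one_le_coeff hw s.1 s.2
  have hCn : (n:ℝ) ≤ C := by
    calc (n:ℝ) = ∑ _s : Σ i : T.Info, T.Act i, (1:ℝ) := by
          rw [Finset.sum_const, Finset.card_univ, nsmul_eq_mul, mul_one]
      _ ≤ C := Finset.sum_le_sum (fun s _ => hcs s)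
  have hn1 : 1 ≤ n := Fintype.card_pos
  have hCpos : (0:ℝ) < C := lt_of_lt_of_le (by exact_mod_cast hn1) hCn
  have hNcard : (Fintype.card T.Idx : ℝ) = (n:ℝ) + 1 := by
    rw [Fintype.card_option]; push_cast; ring
  have hCN : C ≤ S * ((n:ℝ) + 1) := by
    have h1 : C ≤ ∑ _s : Σ i : T.Info, T.Act i, S :=
      Finset.sum_le_sum (fun s _ => by
        have h2 := childSum_nonneg hw s.1 s.2
        have h3 := w_le_rootSum hw s.1
        rw [← hSdef] at h3
        linarith)
    rw [Finset.sum_const, Finset.card_univ, nsmul_eq_mul, ← hndef] at h1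
    nlinarith
  -- rewrite prox as a sum over sequences
  have hprox : T.prox w x
      = ∑ s : Σ i : T.Info, T.Act i,
          (w s.1 - T.childSum w s.1 s.2) * (x (some s) * Real.log (x (some s))) := by
    rw [prox, hx.2.1, Real.log_one, mul_zero, zero_add,
      sigma_sum (fun s => (w s.1 - T.childSum w s.1 s.2)
        * (x (some s) * Real.log (x (some s))))]
  have hsumf : ∑ s : Σ i : T.Info, T.Act i,
      (w s.1 - T.childSum w s.1 s.2) * x (some s) = S := by
    rw [sigma_sum (fun s => (w s.1 - T.childSum w s.1 s.2) * x (some s))]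
    exact telescope hx
  have hsumg : ∑ s : Σ i : T.Info, T.Act i,
      (w s.1 - T.childSum w s.1 s.2) * S / C = S := by
    rw [← Finset.sum_div, ← Finset.sum_mul, ← hCdef]
    field_simp
  -- per-term bound
  have hterm : ∀ s : Σ i : T.Info, T.Act i,
      -((w s.1 - T.childSum w s.1 s.2) * (x (some s) * Real.log (x (some s))))
        ≤ ((w s.1 - T.childSum w s.1 s.2) * S / C
            - (w s.1 - T.childSum w s.1 s.2) * x (some s))
          + ((w s.1 - T.childSum w s.1 s.2) * x (some s)) * Real.log (C / S) := by
    intro s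
    set cs := w s.1 - T.childSum w s.1 s.2 with hcsdef
    have hcs1 : (1:ℝ) ≤ cs := hcs s
    have hcspos : (0:ℝ) < cs := lt_of_lt_of_le one_pos hcs1
    set xs := x (some s) with hxsdef
    rcases (hx.1 (some s)).eq_or_lt with h0 | h0
    · rw [← hxsdef] at h0
      rw [← h0]
      simp only [mul_zero, zero_mul, neg_zero, sub_zero, add_zero, Real.log_zero]
      positivity
    · rw [← hxsdef] at h0
      have hf : (0:ℝ) < cs * xs := by positivity
      have hlog := Real.log_le_sub_one_of_pos
        (show (0:ℝ) < (cs * S / C) / (cs * xs) by positivity)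
      have hmul := mul_le_mul_of_nonneg_left hlog (le_of_lt hf)
      have hcancel : (cs * xs) * ((cs * S / C) / (cs * xs)) = cs * S / C := by
        field_simp
      have key : (cs * xs) * Real.log ((cs * S / C) / (cs * xs))
          ≤ cs * S / C - cs * xs := by nlinarith
      have hlogsplit : Real.log ((cs * S / C) / (cs * xs))
          = Real.log S - Real.log C - Real.log xs := by
        rw [show (cs * S / C) / (cs * xs) = S / (C * xs) by
          field_simp]
        rw [Real.log_div (ne_of_gt hSpos) (by positivity),
          Real.log_mul (ne_of_gt hCpos) (ne_of_gt h0)]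
        ring
      rw [hlogsplit] at key
      rw [Real.log_div (ne_of_gt hCpos) (ne_of_gt hSpos)]
      nlinarith
  have hsum : -T.prox w x ≤ 0 + S * Real.log (C / S) := by
    rw [hprox, ← Finset.sum_neg_distrib]
    calc ∑ s : Σ i : T.Info, T.Act i,
          -((w s.1 - T.childSum w s.1 s.2) * (x (some s) * Real.log (x (some s))))
        ≤ ∑ s : Σ i : T.Info, T.Act i,
            (((w s.1 - T.childSum w s.1 s.2) * S / C
              - (w s.1 - T.childSum w s.1 s.2) * x (some s))
            + ((w s.1 - T.childSum w s.1 s.2) * x (some s)) * Real.log (C / S)) :=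
          Finset.sum_le_sum (fun s _ => hterm s)
      _ = 0 + S * Real.log (C / S) := by
          rw [Finset.sum_add_distrib, Finset.sum_sub_distrib, hsumg,
            ← Finset.sum_mul, hsumf]
          ring
  have hlogle : Real.log (C / S) ≤ Real.log (Fintype.card T.Idx) := by
    rw [hNcard]
    refine Real.log_le_log (by positivity) ?_
    rw [div_le_iff₀ hSpos]
    nlinarith
  calc -T.prox w x ≤ 0 + S * Real.log (C / S) := hsum
    _ = S * Real.log (C / S) := by ring
    _ ≤ S * Real.log (Fintype.card T.Idx) :=
        mul_le_mul_of_nonneg_left hlogle (le_of_lt hSpos)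

end Treeplex


/-- The range of the dilated entropy prox-function on the strategy set is bounded:
`max_{x∈Q} d(x) − min_{x∈Q} d(x) ≤ M_Q ln |Σ|`. -/
theorem stmt9 (T : Treeplex) (w : T.Info → ℝ) (hw : T.IsWeight w)
    (MQ : ℝ) (hMQ : IsGreatest ((fun x => ∑ j, |x j|) '' T.Q) MQ)
    (Dmax Dmin : ℝ)
    (hDmax : IsGreatest (T.prox w '' T.Q) Dmax)
    (hDmin : IsLeast (T.prox w '' T.Q) Dmin) :
    Dmax - Dmin ≤ MQ * Real.log (Fintype.card T.Idx) := by
  obtain ⟨x2, hx2, hDx2⟩ := hDmax.1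
  obtain ⟨x1, hx1, hDx1⟩ := hDmin.1
  have hN1 : (1:ℝ) ≤ (Fintype.card T.Idx : ℝ) := by
    exact_mod_cast Fintype.card_pos (α := T.Idx)
  have hlogN : 0 ≤ Real.log (Fintype.card T.Idx) := Real.log_nonneg hN1
  have hDmax0 : Dmax ≤ 0 := hDx2 ▸ Treeplex.prox_nonpos hw hx2
  rcases isEmpty_or_nonempty T.Info with hE | hNE
  · -- no information sets: prox is identically 0 on Q
    have hzero : ∀ y ∈ T.Q, T.prox w y = 0 := by
      intro y hy
      rw [Treeplex.prox, hy.2.1, Real.log_one, mul_zero, zero_add]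
      simp
    have hMQ0 : 0 ≤ MQ := by
      obtain ⟨x0, hx0, hx0e⟩ := hMQ.1
      rw [← hx0e]
      exact Finset.sum_nonneg (fun j _ => abs_nonneg _)
    rw [← hDx2, ← hDx1, hzero x2 hx2, hzero x1 hx1]
    simpa using mul_nonneg hMQ0 hlogN
  · set S := ∑ j ∈ T.roots, w j with hSdef
    have hMQS : 1 + S ≤ MQ := by
      have hmem : (∑ j, |Treeplex.xstar T (Treeplex.choiceFn T w) j|) ≤ MQ :=
        hMQ.2 ⟨Treeplex.xstar T (Treeplex.choiceFn T w), Treeplex.xstar_mem_Q _, rfl⟩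
      rwa [Treeplex.xstar_norm hw] at hmem
    have hDminS : -(S * Real.log (Fintype.card T.Idx)) ≤ Dmin := by
      have := Treeplex.neg_prox_le hw hx1
      rw [hDx1] at this
      linarith
    have hSMQ : S ≤ MQ := by linarith
    calc Dmax - Dmin ≤ 0 + S * Real.log (Fintype.card T.Idx) := by linarith
      _ = S * Real.log (Fintype.card T.Idx) := by ring
      _ ≤ MQ * Real.log (Fintype.card T.Idx) :=
          mul_le_mul_of_nonneg_right hSMQ hlogN
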